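/- Preservation of pulson order: suppose b > 1, g is continuous with g(0) = 1 and g(x) < 1 for x ≠ 0, and along a two-pulson trajectory p² = (c₁+c₂)² − 4c₁c₂/(1−g(q))^{b−1} holds with c₁c₂ > 0. Then q(t) ≠ 0 for all t: i.e., the separation can never vanish. -/

import Mathlib

/-- Preservation of pulson order: for `b > 1`, `g` continuous with `g 0 = 1` and
`g x < 1` off zero, along a two-pulson trajectory satisfying
`p² = (c₁+c₂)² - 4c₁c₂ (1-g(q))^(1-b)` wherever `q ≠ 0`, with `c₁c₂ > 0` and
`q 0 < 0`, the separation never vanishes: `q t < 0` for all `t`. -/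
theorem pulson_order_preserved
    (g : ℝ → ℝ) (b c₁ c₂ : ℝ)
    (hb : 1 < b)
    (hgcont : Continuous g)
    (hg0 : g 0 = 1)
    (hglt : ∀ x ≠ (0 : ℝ), g x < 1)
    (hc : 0 < c₁ * c₂)
    (p q : ℝ → ℝ)
    (hpcont : Continuous p)
    (hqcont : Continuous q)
    (hq0 : q 0 < 0)
    (hid : ∀ t, q t ≠ 0 →
      (p t) ^ 2 = (c₁ + c₂) ^ 2 - 4 * c₁ * c₂ * (1 - g (q t)) ^ ((1 : ℝ) - b)) :
    ∀ t, q t < 0 := by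
  set K : ℝ := (c₁ + c₂) ^ 2 with hKdef
  have h4c : 0 < 4 * c₁ * c₂ := by nlinarith
  have hKpos : 0 < K := by nlinarith [sq_nonneg (c₁ - c₂)]
  set m : ℝ := 4 * c₁ * c₂ / K with hmdef
  have hm : 0 < m := div_pos h4c hKpos
  have hb1 : 0 < b - 1 := by linarith
  set ε : ℝ := m ^ (1 / (b - 1)) with hεdef
  have hε : 0 < ε := Real.rpow_pos_of_pos hm _
  -- key bound: off the zero set, g(q t) ≤ 1 - ε
  have key : ∀ t, q t ≠ 0 → g (q t) ≤ 1 - ε := by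
    intro t ht
    have hu : 0 < 1 - g (q t) := by linarith [hglt (q t) ht]
    set u : ℝ := 1 - g (q t) with hudef
    have hid' := hid t ht
    have hpnn : 0 ≤ (p t) ^ 2 := sq_nonneg _
    have hle : 4 * c₁ * c₂ * u ^ ((1 : ℝ) - b) ≤ K := by linarith
    have hupow : u ^ ((1 : ℝ) - b) = (u ^ (b - 1))⁻¹ := by
      rw [show (1 : ℝ) - b = -(b - 1) by ring, Real.rpow_neg hu.le]
    have hupos : 0 < u ^ (b - 1) := Real.rpow_pos_of_pos hu _
    have hinv : (u ^ (b - 1))⁻¹ ≤ K / (4 * c₁ * c₂) := by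
      rw [← hupow]
      rw [le_div_iff₀ h4c] at *
      nlinarith
    have hmle : m ≤ u ^ (b - 1) := by
      rw [hmdef]
      rw [div_le_iff₀ hKpos]
      have h1 : 1 ≤ (u ^ (b - 1)) * (K / (4 * c₁ * c₂)) := by
        calc (1 : ℝ) = (u ^ (b - 1)) * (u ^ (b - 1))⁻¹ := by
              field_simp
          _ ≤ (u ^ (b - 1)) * (K / (4 * c₁ * c₂)) := by
              exact mul_le_mul_of_nonneg_left hinv hupos.le
      have := mul_le_mul_of_nonneg_left h1 h4c.le
      calc 4 * c₁ * c₂ = 4 * c₁ * c₂ * 1 := by ring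
        _ ≤ 4 * c₁ * c₂ * ((u ^ (b - 1)) * (K / (4 * c₁ * c₂))) := this
        _ = u ^ (b - 1) * K := by field_simp; exact div_self hc.ne'
    have hεu : ε ≤ u := by
      have h2 : m ^ (1 / (b - 1)) ≤ (u ^ (b - 1)) ^ (1 / (b - 1)) :=
        Real.rpow_le_rpow hm.le hmle (by positivity)
      have h3 : (u ^ (b - 1)) ^ (1 / (b - 1)) = u := by
        rw [← Real.rpow_mul hu.le, mul_one_div, div_self (ne_of_gt hb1), Real.rpow_one]
      rw [hεdef]
      rw [h3] at h2
      exact h2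
    simp only [hudef] at hεu
    linarith
  -- the zero set of q is clopen
  have hclopen : IsClopen (q ⁻¹' {0}) := by
    constructor
    · exact isClosed_singleton.preimage hqcont
    · rw [isOpen_iff_mem_nhds]
      intro s hs
      have hgs : g (q s) = 1 := by
        simp only [Set.mem_preimage, Set.mem_singleton_iff] at hs
        rw [hs, hg0]
      have hcont : Continuous fun t => g (q t) := hgcont.comp hqcont
      have hnear : ∀ᶠ t in nhds s, g (q t) > 1 - ε := by
        have : Set.Ioi (1 - ε) ∈ nhds (g (q s)) := by
          apply Ioi_mem_nhds; rw [hgs]; linarith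
        exact hcont.continuousAt.eventually_mem this
      filter_upwards [hnear] with t ht
      simp only [Set.mem_preimage, Set.mem_singleton_iff]
      by_contra hne
      have := key t hne
      linarith
  -- clopen and not everything ⟹ empty
  have hempty : q ⁻¹' {0} = ∅ := by
    rcases (isClopen_iff.mp hclopen) with h | h
    · exact h
    · exfalso
      have : (0 : ℝ) ∈ q ⁻¹' {0} := by rw [h]; trivial
      simp only [Set.mem_preimage, Set.mem_singleton_iff] at this
      linarith
  have hne : ∀ t, q t ≠ 0 := by
    intro t ht
    have : t ∈ q ⁻¹' {0} := by simpa using ht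
    rw [hempty] at this
    exact this
  intro t
  rcases lt_trichotomy (q t) 0 with h | h | h
  · exact h
  · exact absurd h (hne t)
  · exfalso
    have hsub := intermediate_value_uIcc (a := 0) (b := t) hqcont.continuousOn
    have h0mem : (0 : ℝ) ∈ Set.uIcc (q 0) (q t) := by
      rw [Set.mem_uIcc]; left; constructor <;> linarith
    obtain ⟨s, _, hqs⟩ := hsub h0mem
    exact hne s hqs
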